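/- Given Q-metric spaces (X₁,d₁) over a continuous quantale Q₁ and (X₂,d₂) over a continuous quantale Q₂, a map f : X₁ → X₂ is continuous for the open ball topologies iff for all x ∈ X₁ and all ε ≪ 1₂ there exists δ ≪ 1₁ with f(B(x,δ)) ⊆ B(f(x),ε). -/

import Mathlib

/-- `a` is way-below `b`: for every nonempty directed `D` with `b ≤ sSup D`,
some element of `D` dominates `a`. -/
def WayBelow {Q : Type*} [CompleteLattice Q] (a b : Q) : Prop :=
  ∀ D : Set Q, D.Nonempty → DirectedOn (· ≤ ·) D → b ≤ sSup D → ∃ d ∈ D, a ≤ d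

/-- A complete lattice is continuous if every element is the join of the
elements way-below it. -/
def ContinuousLattice (Q : Type*) [CompleteLattice Q] : Prop :=
  ∀ x : Q, x = sSup {y | WayBelow y x}

/-- Open ball in a `Q`-metric space. -/
def ball {Q X : Type*} [CompleteLattice Q] (d : X → X → Q) (x : X) (δ : Q) : Set X :=
  {y | WayBelow δ (d x y)}

section Helpers

variable {Q : Type*} [CompleteLattice Q]

lemma WayBelow.le {a b : Q} (h : WayBelow a b) : a ≤ b := by
  obtain ⟨d, hd, hle⟩ := h {b} ⟨b, rfl⟩
    (directedOn_singleton b) (by simp)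
  rwa [Set.mem_singleton_iff.mp hd] at hle

lemma WayBelow.mono_left {a' a b : Q} (h1 : a' ≤ a) (h : WayBelow a b) : WayBelow a' b :=
  fun D hne hdir hle => (h D hne hdir hle).imp fun d hd => ⟨hd.1, h1.trans hd.2⟩

lemma WayBelow.trans_le {a b c : Q} (h : WayBelow a b) (hbc : b ≤ c) : WayBelow a c :=
  fun D hne hdir hle => h D hne hdir (hbc.trans hle)

lemma bot_wayBelow (b : Q) : WayBelow ⊥ b :=
  fun _D hne _ _ => hne.imp fun d hd => ⟨hd, bot_le⟩

lemma WayBelow.sup {a b c : Q} (ha : WayBelow a c) (hb : WayBelow b c) :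
    WayBelow (a ⊔ b) c := by
  intro D hne hdir hle
  obtain ⟨d₁, hd₁, h1⟩ := ha D hne hdir hle
  obtain ⟨d₂, hd₂, h2⟩ := hb D hne hdir hle
  obtain ⟨d, hd, hdd₁, hdd₂⟩ := hdir d₁ hd₁ d₂ hd₂
  exact ⟨d, hd, sup_le (h1.trans hdd₁) (h2.trans hdd₂)⟩

lemma wayBelowSet_directed (x : Q) : DirectedOn (· ≤ ·) {y | WayBelow y x} :=
  fun a ha b hb => ⟨a ⊔ b, ha.sup hb, le_sup_left, le_sup_right⟩

/-- Interpolation property of continuous lattices. -/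
lemma WayBelow.interpolate (hc : ContinuousLattice Q) {a b : Q} (h : WayBelow a b) :
    ∃ m, WayBelow a m ∧ WayBelow m b := by
  set D : Set Q := {u | ∃ v, WayBelow u v ∧ WayBelow v b} with hD
  have hne : D.Nonempty := ⟨⊥, ⊥, bot_wayBelow _, bot_wayBelow _⟩
  have hdir : DirectedOn (· ≤ ·) D := by
    rintro u₁ ⟨v₁, hu₁, hv₁⟩ u₂ ⟨v₂, hu₂, hv₂⟩
    refine ⟨u₁ ⊔ u₂, ⟨v₁ ⊔ v₂, ?_, hv₁.sup hv₂⟩, le_sup_left, le_sup_right⟩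
    exact (hu₁.trans_le le_sup_left).sup (hu₂.trans_le le_sup_right)
  have hble : b ≤ sSup D := by
    conv_lhs => rw [hc b]
    refine sSup_le fun v hv => ?_
    conv_lhs => rw [hc v]
    exact sSup_le fun u hu => le_sSup ⟨v, hu, hv⟩
  obtain ⟨u, ⟨v, huv, hvb⟩, hau⟩ := h D hne hdir hble
  exact ⟨v, huv.mono_left hau, hvb⟩

end Helpers

section Quantale

variable {Q : Type*} [CompleteLattice Q] [Monoid Q] [IsQuantale Q]

/-- The key lemma: if `a ≪ b`, there is `δ ≪ 1` such that `δ ≪ c` implies `a ≪ b * c`. -/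
lemma key_lemma (hc : ContinuousLattice Q) {a b : Q} (h : WayBelow a b) :
    ∃ δ : Q, WayBelow δ 1 ∧ ∀ c : Q, WayBelow δ c → WayBelow a (b * c) := by
  obtain ⟨m, ham, hmb⟩ := h.interpolate hc
  set S : Set Q := (b * ·) '' {δ | WayBelow δ 1} with hS
  have hne : S.Nonempty := ⟨b * ⊥, ⊥, bot_wayBelow _, rfl⟩
  have hdir : DirectedOn (· ≤ ·) S := by
    rintro _ ⟨δ₁, hδ₁, rfl⟩ _ ⟨δ₂, hδ₂, rfl⟩
    exact ⟨b * (δ₁ ⊔ δ₂), ⟨δ₁ ⊔ δ₂, hδ₁.sup hδ₂, rfl⟩,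
      mul_le_mul_right le_sup_left b, mul_le_mul_right le_sup_right b⟩
  have hble : b ≤ sSup S := by
    have h1 : b * sSup {δ : Q | WayBelow δ 1} = sSup S := by
      rw [mul_sSup_distrib, hS, sSup_image]
    rw [← h1, ← hc 1, mul_one]
  obtain ⟨_, ⟨δ, hδ, rfl⟩, hmle⟩ := hmb S hne hdir hble
  refine ⟨δ, hδ, fun c hδc => ?_⟩
  exact ham.trans_le (hmle.trans (mul_le_mul_right hδc.le b))

variable {X : Type*} (d : X → X → Q)

lemma mem_ball_self (hrefl : ∀ x : X, 1 ≤ d x x) {x : X} {δ : Q} (hδ : WayBelow δ 1) :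
    x ∈ ball d x δ :=
  hδ.trans_le (hrefl x)

/-- Every point of a ball has a ball around it inside the ball. -/
lemma ball_subset_ball (hc : ContinuousLattice Q)
    (htri : ∀ x y z : X, d x y * d y z ≤ d x z) {x₀ y : X} {δ₀ : Q}
    (h : y ∈ ball d x₀ δ₀) :
    ∃ δ : Q, WayBelow δ 1 ∧ ball d y δ ⊆ ball d x₀ δ₀ := by
  obtain ⟨δ, hδ1, hδ⟩ := key_lemma hc h
  exact ⟨δ, hδ1, fun z hz => (hδ (d y z) hz).trans_le (htri x₀ y z)⟩

lemma exists_ball_subset (hc : ContinuousLattice Q)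
    (htri : ∀ x y z : X, d x y * d y z ≤ d x z) {U : Set X}
    (hU : TopologicalSpace.GenerateOpen
      {s | ∃ (x : X) (δ : Q), WayBelow δ 1 ∧ s = ball d x δ} U) :
    ∀ x ∈ U, ∃ δ : Q, WayBelow δ 1 ∧ ball d x δ ⊆ U := by
  induction hU with
  | basic s hs =>
      obtain ⟨x₀, δ₀, _, rfl⟩ := hs
      exact fun x hx => ball_subset_ball d hc htri hx
  | univ => exact fun x _ => ⟨⊥, bot_wayBelow _, Set.subset_univ _⟩
  | inter s t _ _ ihs iht =>
      intro x hx
      obtain ⟨δ₁, hδ₁, hs₁⟩ := ihs x hx.1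
      obtain ⟨δ₂, hδ₂, hs₂⟩ := iht x hx.2
      refine ⟨δ₁ ⊔ δ₂, hδ₁.sup hδ₂, fun y hy => ?_⟩
      exact ⟨hs₁ (WayBelow.mono_left le_sup_left hy), hs₂ (WayBelow.mono_left le_sup_right hy)⟩
  | sUnion T _ ih =>
      rintro x ⟨t, ht, hxt⟩
      obtain ⟨δ, hδ, hsub⟩ := ih t ht x hxt
      exact ⟨δ, hδ, hsub.trans (Set.subset_sUnion_of_mem ht)⟩

end Quantale

theorem continuous_iff_epsilon_delta {Q₁ Q₂ X₁ X₂ : Type*}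
    [CompleteLattice Q₁] [Monoid Q₁] [IsQuantale Q₁]
    [CompleteLattice Q₂] [Monoid Q₂] [IsQuantale Q₂]
    (hcont₁ : ContinuousLattice Q₁) (hcont₂ : ContinuousLattice Q₂)
    (d₁ : X₁ → X₁ → Q₁) (hrefl₁ : ∀ x : X₁, 1 ≤ d₁ x x)
    (htri₁ : ∀ x y z : X₁, d₁ x y * d₁ y z ≤ d₁ x z)
    (d₂ : X₂ → X₂ → Q₂) (hrefl₂ : ∀ x : X₂, 1 ≤ d₂ x x)
    (htri₂ : ∀ x y z : X₂, d₂ x y * d₂ y z ≤ d₂ x z)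
    (f : X₁ → X₂) :
    @Continuous X₁ X₂
      (TopologicalSpace.generateFrom
        {s | ∃ (x : X₁) (δ : Q₁), WayBelow δ 1 ∧ s = ball d₁ x δ})
      (TopologicalSpace.generateFrom
        {s | ∃ (x : X₂) (δ : Q₂), WayBelow δ 1 ∧ s = ball d₂ x δ}) f ↔
      ∀ (x : X₁) (ε : Q₂), WayBelow ε 1 →
        ∃ δ : Q₁, WayBelow δ 1 ∧ f '' ball d₁ x δ ⊆ ball d₂ (f x) ε := by
  set S₁ : Set (Set X₁) := {s | ∃ (x : X₁) (δ : Q₁), WayBelow δ 1 ∧ s = ball d₁ x δ} with hS₁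
  set S₂ : Set (Set X₂) := {s | ∃ (x : X₂) (δ : Q₂), WayBelow δ 1 ∧ s = ball d₂ x δ} with hS₂
  letI t₁ : TopologicalSpace X₁ := TopologicalSpace.generateFrom S₁
  letI t₂ : TopologicalSpace X₂ := TopologicalSpace.generateFrom S₂
  constructor
  · intro hf x ε hε
    have hopen : @IsOpen X₂ t₂ (ball d₂ (f x) ε) :=
      TopologicalSpace.isOpen_generateFrom_of_mem ⟨f x, ε, hε, rfl⟩
    have hpre : TopologicalSpace.GenerateOpen S₁ (f ⁻¹' ball d₂ (f x) ε) :=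
      hf.isOpen_preimage _ hopen
    have hx : x ∈ f ⁻¹' ball d₂ (f x) ε := mem_ball_self d₂ hrefl₂ hε
    obtain ⟨δ, hδ, hsub⟩ := exists_ball_subset d₁ hcont₁ htri₁ hpre x hx
    exact ⟨δ, hδ, Set.image_subset_iff.mpr hsub⟩
  · intro h
    rw [continuous_generateFrom_iff]
    rintro s ⟨x₂, ε, hε, rfl⟩
    have : f ⁻¹' ball d₂ x₂ ε =
        ⋃₀ {t | t ∈ S₁ ∧ t ⊆ f ⁻¹' ball d₂ x₂ ε} := by
      ext x
      constructor
      · intro hx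
        obtain ⟨ε', hε', hsub⟩ := ball_subset_ball d₂ hcont₂ htri₂ hx
        obtain ⟨δ, hδ, hsub'⟩ := h x ε' hε'
        refine ⟨ball d₁ x δ, ⟨⟨x, δ, hδ, rfl⟩, ?_⟩, mem_ball_self d₁ hrefl₁ hδ⟩
        intro y hy
        exact hsub (hsub' ⟨y, hy, rfl⟩)
      · rintro ⟨t, ⟨_, hsub⟩, hxt⟩
        exact hsub hxt
    rw [this]
    exact TopologicalSpace.GenerateOpen.sUnion _ fun t ht =>
      TopologicalSpace.GenerateOpen.basic t ht.1
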